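/- Let n ≥ 2 and let a, c_1, …, c_n be positive real numbers. Then the inequality 1/(a + c_1 α_1) + 1/(a + c_2 α_2) + ⋯ + 1/(a + c_n α_n) ≤ 1 holds for all positive real numbers α_1, …, α_n satisfying α_1 α_2 ⋯ α_n = 1 if and only if a ≥ n − 1 and (c_1 c_2 ⋯ c_n)^{1/n} ≥ n − a. -/

import Mathlib

open Finset

/-- Key lemma: if `0 < g ≤ 1`, `v i > 0` and `∏ v = 1`, then
`∑ i, 1/(g + (n-g) v i) ≥ 1`. -/
lemma key_ha (n : ℕ) (hn : 2 ≤ n) (g : ℝ) (hg0 : 0 < g) (hg1 : g ≤ 1)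
    (v : Fin n → ℝ) (hv : ∀ i, 0 < v i) (hpv : ∏ i, v i = 1) :
    1 ≤ ∑ i, 1 / (g + ((n : ℝ) - g) * v i) := by
  by_contra hcon
  push_neg at hcon
  set b : ℝ := (n : ℝ) - g with hb
  have hn2 : (2 : ℝ) ≤ (n : ℝ) := by exact_mod_cast hn
  have hb0 : 0 < b := by simp only [hb]; linarith
  haveI : Nonempty (Fin n) := ⟨⟨0, by omega⟩⟩
  set z : Fin n → ℝ := fun i => 1 / (g + b * v i) with hzdef
  have hd : ∀ i, 0 < g + b * v i := fun i => add_pos hg0 (mul_pos hb0 (hv i))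
  have hz0 : ∀ i, 0 < z i := fun i => one_div_pos.mpr (hd i)
  -- weights
  set w : Fin n → Fin n → ℝ := fun i j => if i = j then (1 - g) / b else 1 / b with hwdef
  have hwsplit : ∀ i j, w i j = 1 / b - (if i = j then g / b else 0) := by
    intro i j
    by_cases h : i = j
    · simp only [hwdef, h, if_true]; ring
    · simp only [hwdef, h, if_false]; ring
  have hwsum : ∀ i, ∑ j, w i j = 1 := by
    intro i
    simp only [hwsplit]
    rw [Finset.sum_sub_distrib, Finset.sum_ite_eq, Finset.sum_const]
    simp only [Finset.mem_univ, if_true, Finset.card_univ, Fintype.card_fin, nsmul_eq_mul]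
    field_simp
    exact hb.symm
  have hwsum' : ∀ j, ∑ i, w i j = 1 := by
    intro j
    simp only [hwsplit]
    rw [Finset.sum_sub_distrib, Finset.sum_ite_eq', Finset.sum_const]
    simp only [Finset.mem_univ, if_true, Finset.card_univ, Fintype.card_fin, nsmul_eq_mul]
    field_simp
    exact hb.symm
  have hwnn : ∀ i j, 0 ≤ w i j := by
    intro i j
    by_cases h : i = j
    · simp only [hwdef, h, if_true]; exact div_nonneg (by linarith) hb0.le
    · simp only [hwdef, h, if_false]; positivity
  -- per-index strict inequality
  have keystep : ∀ i, ∏ j, z j ^ w i j < v i * z i := by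
    intro i
    have amgm := Real.geom_mean_le_arith_mean_weighted Finset.univ (w i) z
      (fun j _ => hwnn i j) (hwsum i) (fun j _ => (hz0 j).le)
    have hsum' : ∑ j, w i j * z j = (∑ j, z j - g * z i) / b := by
      have : ∀ j, w i j * z j = (1 / b) * z j - (if i = j then (g / b) * z j else 0) := by
        intro j
        by_cases h : i = j
        · simp only [hwdef, h, if_true]; ring
        · simp only [hwdef, h, if_false]; ring
      rw [Finset.sum_congr rfl (fun j _ => this j), Finset.sum_sub_distrib,
        Finset.sum_ite_eq, ← Finset.mul_sum]
      simp only [Finset.mem_univ, if_true]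
      field_simp
    have hvz : v i * z i = (1 - g * z i) / b := by
      have hne : g + b * v i ≠ 0 := (hd i).ne'
      simp only [hzdef]
      field_simp
      rw [eq_sub_iff_add_eq, ← add_div, add_comm (v i * b) g, div_self (ne_of_gt (by linarith [hd i]))]
    have hzsum : ∑ j, z j < 1 := hcon
    have hlt : (∑ j, z j - g * z i) / b < (1 - g * z i) / b :=
      div_lt_div_of_pos_right (by linarith) hb0
    calc ∏ j, z j ^ w i j ≤ ∑ j, w i j * z j := amgm
      _ = (∑ j, z j - g * z i) / b := hsum'
      _ < (1 - g * z i) / b := hlt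
      _ = v i * z i := hvz.symm
  -- multiply over i
  have hprodlt : ∏ i, (∏ j, z j ^ w i j) < ∏ i, (v i * z i) := by
    apply Finset.prod_lt_prod_of_nonempty
    · intro i _
      exact Finset.prod_pos fun j _ => Real.rpow_pos_of_pos (hz0 j) _
    · intro i _; exact keystep i
    · exact Finset.univ_nonempty
  have hlhs : ∏ i, (∏ j, z j ^ w i j) = ∏ j, z j := by
    rw [Finset.prod_comm]
    refine Finset.prod_congr rfl fun j _ => ?_
    rw [← Real.rpow_sum_of_pos (hz0 j), hwsum' j, Real.rpow_one]
  have hrhs : ∏ i, (v i * z i) = ∏ j, z j := by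
    rw [Finset.prod_mul_distrib, hpv, one_mul]
  rw [hlhs, hrhs] at hprodlt
  exact lt_irrefl _ hprodlt

/-- **Ha's inequality criterion.**
Let `n ≥ 2` and let `a, c₁, …, cₙ` be positive real numbers.  The inequality
`∑ i, 1 / (a + cᵢ * αᵢ) ≤ 1` holds for all positive reals `α₁, …, αₙ` with `α₁ ⋯ αₙ = 1`
if and only if `a ≥ n - 1` and `(c₁ ⋯ cₙ)^(1/n) ≥ n - a`. -/
theorem sum_inv_le_one_iff (n : ℕ) (hn : 2 ≤ n) (a : ℝ) (ha : 0 < a)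
    (c : Fin n → ℝ) (hc : ∀ i, 0 < c i) :
    (∀ α : Fin n → ℝ, (∀ i, 0 < α i) → ∏ i, α i = 1 →
        ∑ i, 1 / (a + c i * α i) ≤ 1) ↔
      ((n : ℝ) - 1 ≤ a ∧ (n : ℝ) - a ≤ (∏ i, c i) ^ ((1 : ℝ) / n)) := by
  haveI : NeZero n := ⟨by omega⟩
  have hP : 0 < ∏ i, c i := Finset.prod_pos fun i _ => hc i
  set G : ℝ := (∏ i, c i) ^ ((1 : ℝ) / n) with hGdef
  have hG0 : 0 < G := Real.rpow_pos_of_pos hP _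
  have hnR : (0 : ℝ) < n := by positivity
  have hGn : G ^ n = ∏ i, c i := by
    rw [hGdef, ← Real.rpow_natCast ((∏ i, c i) ^ ((1:ℝ)/n)) n, ← Real.rpow_mul hP.le]
    rw [one_div, inv_mul_cancel₀ (by positivity : (n:ℝ) ≠ 0), Real.rpow_one]
  constructor
  · intro h
    constructor
    · -- a ≥ n - 1
      set S : ℝ := ∑ i, c i with hSdef
      have hS0 : 0 < S := Finset.sum_pos (fun i _ => hc i) Finset.univ_nonempty
      apply le_of_forall_pos_le_add
      intro ε hε
      set δ : ℝ := ε / S with hδdef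
      have hδ0 : 0 < δ := by positivity
      set α : Fin n → ℝ := fun i => if i = 0 then (δ ^ (n - 1))⁻¹ else δ with hαdef
      have hα0 : ∀ i, 0 < α i := by
        intro i; by_cases hi : i = 0 <;> simp [hαdef, hi] <;> positivity
      have hαprod : ∏ i, α i = 1 := by
        rw [← Finset.mul_prod_erase Finset.univ α (Finset.mem_univ 0)]
        have h1 : α 0 = (δ ^ (n - 1))⁻¹ := by simp [hαdef]
        have h2 : ∏ i ∈ Finset.univ.erase 0, α i = δ ^ (n - 1) := by
          rw [Finset.prod_congr rfl (fun i hi => ?_), Finset.prod_const,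
            Finset.card_erase_of_mem (Finset.mem_univ 0), Finset.card_univ, Fintype.card_fin]
          simp [hαdef, (Finset.mem_erase.mp hi).1]
        rw [h1, h2, inv_mul_cancel₀ (by positivity)]
      have hsum := h α hα0 hαprod
      have hterm0 : 0 < 1 / (a + c 0 * α 0) := by
        have := hc 0; have := hα0 0; positivity
      have hsplit : 1 / (a + c 0 * α 0) + ∑ i ∈ Finset.univ.erase 0, 1 / (a + c i * α i)
          = ∑ i, 1 / (a + c i * α i) :=
        Finset.add_sum_erase Finset.univ (fun i => 1 / (a + c i * α i)) (Finset.mem_univ 0)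
      have herase : ∑ i ∈ Finset.univ.erase 0, 1 / (a + c i * α i) ≤ 1 := by linarith
      have hlow : ∀ i ∈ Finset.univ.erase 0, 1 / (a + S * δ) ≤ 1 / (a + c i * α i) := by
        intro i hi
        have hi0 : i ≠ 0 := (Finset.mem_erase.mp hi).1
        have hαi : α i = δ := by simp [hαdef, hi0]
        rw [hαi]
        apply one_div_le_one_div_of_le (by have := mul_pos (hc i) hδ0; linarith)
        have hciS : c i ≤ S := Finset.single_le_sum (fun j _ => (hc j).le) (Finset.mem_univ i)
        nlinarith
      have hcard : (Finset.univ.erase (0 : Fin n)).card = n - 1 := by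
        rw [Finset.card_erase_of_mem (Finset.mem_univ 0), Finset.card_univ, Fintype.card_fin]
      have hlow2 : ((n : ℝ) - 1) * (1 / (a + S * δ))
          ≤ ∑ i ∈ Finset.univ.erase 0, 1 / (a + c i * α i) := by
        calc ((n : ℝ) - 1) * (1 / (a + S * δ))
            = ∑ _i ∈ Finset.univ.erase (0 : Fin n), 1 / (a + S * δ) := by
              rw [Finset.sum_const, hcard, nsmul_eq_mul, Nat.cast_sub (by omega), Nat.cast_one]
          _ ≤ _ := Finset.sum_le_sum hlow
      have hSδ : S * δ = ε := by rw [hδdef]; field_simp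
      have haS : 0 < a + S * δ := by positivity
      have : ((n : ℝ) - 1) * (1 / (a + S * δ)) ≤ 1 := le_trans hlow2 herase
      rw [mul_one_div, div_le_one haS] at this
      linarith [hSδ ▸ this]
    · -- G ≥ n - a
      set α : Fin n → ℝ := fun i => G / c i with hαdef
      have hα0 : ∀ i, 0 < α i := fun i => div_pos hG0 (hc i)
      have hαprod : ∏ i, α i = 1 := by
        rw [hαdef]
        rw [Finset.prod_div_distrib, Finset.prod_const, Finset.card_univ, Fintype.card_fin,
          hGn, div_self hP.ne']
      have hsum := h α hα0 hαprod
      have heq : ∀ i, c i * α i = G := fun i => by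
        show c i * (G / c i) = G
        rw [mul_comm, div_mul_cancel₀ _ (hc i).ne']
      rw [Finset.sum_congr rfl (fun i _ => by rw [heq i])] at hsum
      rw [Finset.sum_const, Finset.card_univ, Fintype.card_fin, nsmul_eq_mul,
        mul_one_div] at hsum
      have haG : 0 < a + G := by linarith
      rw [div_le_one haG] at hsum
      linarith
  · rintro ⟨ha1, haG⟩ α hα0 hαprod
    by_cases han : (n : ℝ) ≤ a
    · -- easy case a ≥ n
      have : ∀ i, 1 / (a + c i * α i) ≤ 1 / a := by
        intro i
        apply one_div_le_one_div_of_le ha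
        have := mul_pos (hc i) (hα0 i); linarith
      calc ∑ i, 1 / (a + c i * α i) ≤ ∑ _i : Fin n, 1 / a :=
            Finset.sum_le_sum fun i _ => this i
        _ = n / a := by rw [Finset.sum_const, Finset.card_univ, Fintype.card_fin,
            nsmul_eq_mul, mul_one_div]
        _ ≤ 1 := by rw [div_le_one ha]; exact han
    · push_neg at han
      set g : ℝ := (n : ℝ) - a with hgdef
      have hg0 : 0 < g := by simp only [hgdef]; linarith
      have hg1 : g ≤ 1 := by simp only [hgdef]; linarith
      have hgG : g ≤ G := haG
      set v : Fin n → ℝ := fun i => G / (c i * α i) with hvdef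
      have hx0 : ∀ i, 0 < c i * α i := fun i => mul_pos (hc i) (hα0 i)
      have hv0 : ∀ i, 0 < v i := fun i => div_pos hG0 (hx0 i)
      have hvprod : ∏ i, v i = 1 := by
        rw [hvdef]
        rw [Finset.prod_div_distrib, Finset.prod_const, Finset.card_univ, Fintype.card_fin,
          Finset.prod_mul_distrib, hαprod, mul_one, hGn, div_self hP.ne']
      have hkey := key_ha n hn g hg0 hg1 v hv0 hvprod
      have hna : (n : ℝ) - g = a := by simp [hgdef]
      rw [hna] at hkey
      -- termwise bound
      have hterm : ∀ i, 1 / (a + c i * α i) ≤ (1 / a) * (1 - g * (1 / (g + a * v i))) := by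
        intro i
        set x : ℝ := c i * α i with hxdef
        have hx : 0 < x := hx0 i
        have hgav : 0 < g + a * v i := by have := hv0 i; positivity
        have hvx : v i = G / x := rfl
        have hrhs : (1 / a) * (1 - g * (1 / (g + a * v i))) = G / (g * x + a * G) := by
          rw [hvx]
          have hgden : 0 < g * x + a * G := by positivity
          field_simp
          ring
        rw [hrhs]
        rw [div_le_div_iff₀ (by linarith) (by positivity)]
        have : g * x ≤ G * x := mul_le_mul_of_nonneg_right hgG hx.le
        nlinarith
      calc ∑ i, 1 / (a + c i * α i)
          ≤ ∑ i, (1 / a) * (1 - g * (1 / (g + a * v i))) :=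
            Finset.sum_le_sum fun i _ => hterm i
        _ = (1 / a) * ((n : ℝ) - g * ∑ i, 1 / (g + a * v i)) := by
            rw [← Finset.mul_sum]
            congr 1
            rw [Finset.sum_sub_distrib, Finset.sum_const, Finset.card_univ, Fintype.card_fin,
              nsmul_eq_mul, mul_one, ← Finset.mul_sum]
        _ ≤ (1 / a) * ((n : ℝ) - g * 1) := by
            apply mul_le_mul_of_nonneg_left _ (by positivity)
            have : g * 1 ≤ g * ∑ i, 1 / (g + a * v i) :=
              mul_le_mul_of_nonneg_left hkey hg0.le
            linarith
        _ = 1 := by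
            rw [mul_one, hna, one_div, inv_mul_cancel₀ ha.ne']
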